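/- Let F be a finite field, let ψ : F → ℂ be a nontrivial additive character, and fix a monotone block function b : Fin n → Fin k. For every g ∈ GL(n,F) one has Σ_{m ∈ 𝔫} ψ(tr(g·(1+m))) = |𝔫|·ψ(tr g) if g lies in the standard parabolic P (i.e. g i j = 0 whenever b i > b j), and Σ_{m ∈ 𝔫} ψ(tr(g·(1+m))) = 0 if g does not lie in P. (This is the function-theoretic content, for G = GL(n) and the standard representation, of the paper's Conjecture 'main' asserting that the pushforward (q_P)_! of the γ-sheaf Φ_{G,ρ,ψ} under G → G/U vanishes outside the Levi subgroup M.) -/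

import Mathlib

/-- The nilpotent radical `𝔫` of the standard parabolic determined by the monotone
block function `b`: matrices `m` with `m i j = 0` unless `b i < b j`. -/
def NilRad {F : Type} [Field F] {n k : ℕ} (b : Fin n → Fin k) : Type :=
  {m : Matrix (Fin n) (Fin n) F // ∀ i j : Fin n, ¬ b i < b j → m i j = 0}

noncomputable instance {F : Type} [Field F] [Fintype F] [DecidableEq F] {n k : ℕ}
    (b : Fin n → Fin k) : Fintype (NilRad (F := F) b) := by
  unfold NilRad; classical infer_instance

section Aux

variable {F : Type} [Field F] [Fintype F] [DecidableEq F] {n k : ℕ} (b : Fin n → Fin k)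

/-- pairs indexing entries of the nilradical -/
abbrev NRPairs := {p : Fin n × Fin n // b p.1 < b p.2}

def nilEquiv : (NRPairs b → F) ≃ NilRad (F := F) b where
  toFun f := ⟨fun i j => if h : b i < b j then f ⟨(i, j), h⟩ else 0,
    fun i j h => by simp [h]⟩
  invFun m p := m.1 p.1.1 p.1.2
  left_inv f := by funext p; simp [p.2]
  right_inv m := by
    apply Subtype.ext
    ext i j
    by_cases h : b i < b j
    · simp [h]
    · simp [h, m.2 i j h]

lemma trace_nilEquiv (g : Matrix (Fin n) (Fin n) F) (f : NRPairs b → F) :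
    (g * ((nilEquiv b f).1)).trace = ∑ p : NRPairs b, g p.1.2 p.1.1 * f p := by
  rw [Matrix.trace_mul_comm]
  have : ((nilEquiv b f).1 * g).trace
      = ∑ q : Fin n × Fin n, (nilEquiv b f).1 q.1 q.2 * g q.2 q.1 := by
    rw [Fintype.sum_prod_type]
    simp [Matrix.trace, Matrix.diag, Matrix.mul_apply]
  rw [this]
  rw [← Fintype.sum_subtype_add_sum_subtype (fun q : Fin n × Fin n => b q.1 < b q.2)
    (fun q => (nilEquiv b f).1 q.1 q.2 * g q.2 q.1)]
  have h2 : ∑ q : {q : Fin n × Fin n // ¬ b q.1 < b q.2},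
      (nilEquiv b f).1 q.1.1 q.1.2 * g q.1.2 q.1.1 = 0 := by
    apply Finset.sum_eq_zero
    intro q _
    exact mul_eq_zero_of_left (dif_neg q.2) _
  rw [h2, add_zero]
  apply Finset.sum_congr rfl
  intro p _
  rw [mul_comm]
  exact congrArg (g p.1.2 p.1.1 * ·) (dif_pos p.2)

end Aux

theorem sum_psi_trace_over_nilradical {F : Type} [Field F] [Fintype F] [DecidableEq F]
    (ψ : AddChar F ℂ) (hψ : ψ ≠ 1) {n k : ℕ} (b : Fin n → Fin k) (hb : Monotone b)
    (g : GL (Fin n) F) :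
    ((∀ i j : Fin n, b j < b i → (g : Matrix (Fin n) (Fin n) F) i j = 0) →
      ∑ m : NilRad (F := F) b,
          ψ (((g : Matrix (Fin n) (Fin n) F) * (1 + m.1)).trace)
        = (Fintype.card (NilRad (F := F) b) : ℂ) *
            ψ ((g : Matrix (Fin n) (Fin n) F).trace)) ∧
    ((¬ ∀ i j : Fin n, b j < b i → (g : Matrix (Fin n) (Fin n) F) i j = 0) →
      ∑ m : NilRad (F := F) b,
          ψ (((g : Matrix (Fin n) (Fin n) F) * (1 + m.1)).trace) = 0) := by
  classical
  set G : Matrix (Fin n) (Fin n) F := (g : Matrix (Fin n) (Fin n) F) with hG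
  set c : NRPairs b → F := fun p => G p.1.2 p.1.1 with hc
  -- rewrite summand
  have key : ∀ m : NilRad (F := F) b,
      ψ ((G * (1 + m.1)).trace)
        = ψ (G.trace) * ψ (∑ p : NRPairs b, c p * (nilEquiv b).symm m p) := by
    intro m
    have : G * (1 + m.1) = G + G * m.1 := by rw [mul_add, mul_one]
    rw [this, Matrix.trace_add, AddChar.map_add_eq_mul]
    congr 1
    have := trace_nilEquiv b G ((nilEquiv b).symm m)
    rw [(nilEquiv b).apply_symm_apply] at this
    rw [this]
  have hsum : ∑ m : NilRad (F := F) b, ψ ((G * (1 + m.1)).trace)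
      = ψ (G.trace) * ∑ f : NRPairs b → F, ψ (∑ p : NRPairs b, c p * f p) := by
    rw [Finset.mul_sum]
    rw [← Equiv.sum_comp (nilEquiv b) (fun m : NilRad (F := F) b => ψ ((G * (1 + m.1)).trace))]
    apply Finset.sum_congr rfl
    intro f _
    rw [key (nilEquiv b f), (nilEquiv b).symm_apply_apply]
  constructor
  · intro hP
    have hc0 : ∀ p : NRPairs b, c p = 0 := fun p => hP _ _ p.2
    have : ∀ m : NilRad (F := F) b, ψ ((G * (1 + m.1)).trace) = ψ (G.trace) := by
      intro m
      rw [key m]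
      simp [hc0]
    rw [Finset.sum_congr rfl fun m _ => this m, Finset.sum_const, Finset.card_univ,
      nsmul_eq_mul]
  · intro hP
    push_neg at hP
    obtain ⟨i, j, hij, hg⟩ := hP
    set Ψ : AddChar (NRPairs b → F) ℂ :=
      { toFun := fun f => ψ (∑ p : NRPairs b, c p * f p)
        map_zero_eq_one' := by simp
        map_add_eq_mul' := fun f f' => by
          show ψ (∑ p : NRPairs b, c p * (f p + f' p)) = _
          simp_rw [mul_add]
          rw [Finset.sum_add_distrib, AddChar.map_add_eq_mul] } with hΨ
    have hΨne : Ψ ≠ 1 := by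
      obtain ⟨a, ha⟩ := AddChar.ne_one_iff.1 hψ
      rw [AddChar.ne_one_iff]
      set f0 : NRPairs b → F :=
        Pi.single (⟨(j, i), hij⟩ : NRPairs b) ((c ⟨(j, i), hij⟩)⁻¹ * a) with hf0
      refine ⟨f0, ?_⟩
      have hcp : c ⟨(j, i), hij⟩ ≠ 0 := hg
      have : ∑ p : NRPairs b, c p * f0 p = a := by
        rw [Finset.sum_eq_single (⟨(j, i), hij⟩ : NRPairs b)]
        · rw [hf0, Pi.single_eq_same, ← mul_assoc, mul_inv_cancel₀ hcp, one_mul]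
        · intro p _ hp
          rw [hf0, Pi.single_eq_of_ne hp, mul_zero]
        · simp
      show ψ _ ≠ 1
      rw [this]
      exact ha
    have := AddChar.sum_eq_zero_of_ne_one hΨne
    rw [hsum]
    have h0 : ∑ f : NRPairs b → F, ψ (∑ p : NRPairs b, c p * f p) = 0 := this
    rw [h0, mul_zero]
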